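/- Discrete small-divisor estimate for splitting methods under the cutoff K ≤ π/3 (key claim in the proof of the normal form Theorem 4.2): Let ω : N → ℝ, ℓ ≥ 3, and assume that for each r ∈ {ℓ−2, ℓ−1, ℓ} there exist γ_r > 0 and α_r ≥ 0 such that |Ω(k)| ≥ γ_r · μ(k)^{−α_r} for every k ∈ Z^r with k ∉ A_r. Let h > 0, let 0 < K ≤ π/3, set Λ = K/h, and assume ω_0 ≤ Λ. Let j = (j_1,…,j_ℓ) ∈ I_ℓ with j ∉ A_ℓ be a zero-moment multi-index having at most two components with ω_{a_i} > Λ (in the case of exactly two such components j_p and j_q, assume δ_p = −δ_q), and suppose that h·|ω^Λ_{a_i}| ≤ K for every i and that h·|ω^Λ_{a_i}| ≤ K/(ℓ−2) for all but at most two indices i. Then |exp(i h Ω^Λ(j)) − 1| ≥ (2γ/π) · h · μ(j)^{−α}, where γ = min(γ_ℓ, γ_{ℓ−1}, γ_{ℓ−2}) and α = max(α_ℓ, α_{ℓ−1}, α_{ℓ−2}). -/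

import Mathlib

open scoped BigOperators

/-- The index set `Z = ℤ^d × {±1}`; the sign `δ = ±1` is encoded by a `Bool`
(`true ↦ +1`, `false ↦ -1`). -/
abbrev Idx (d : ℕ) := (Fin d → ℤ) × Bool

/-- The sign associated with a boolean. -/
def sgn (b : Bool) : ℤ := if b then 1 else -1

/-- Conjugation `(a, δ) ↦ (a, -δ)`. -/
def conjIdx {d : ℕ} (j : Idx d) : Idx d := (j.1, !j.2)

/-- `|j| = max(1, ‖a‖)` with `‖a‖` the Euclidean norm of `a ∈ ℤ^d`. -/
noncomputable def absIdx {d : ℕ} (j : Idx d) : ℝ :=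
  max 1 (Real.sqrt (∑ i, ((j.1 i : ℝ)) ^ 2))

/-- The moment `M(j) = δ₁ a₁ + ⋯ + δ_ℓ a_ℓ ∈ ℤ^d` of a multi-index. -/
def moment {d ℓ : ℕ} (j : Fin ℓ → Idx d) : Fin d → ℤ :=
  ∑ i, sgn (j i).2 • (j i).1

/-- `Ω(j) = δ₁ ω_{a₁} + ⋯ + δ_ℓ ω_{a_ℓ}`. -/
def bigOmega {d ℓ : ℕ} (ω : (Fin d → ℤ) → ℝ) (j : Fin ℓ → Idx d) : ℝ :=
  ∑ i, (sgn (j i).2 : ℝ) * ω (j i).1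

/-- `j ∈ A_ℓ` : the multi-index depends only on the actions, i.e. `ℓ` is even and `j`
is a permutation of `((b₁,1),…,(b_{ℓ/2},1),(b₁,-1),…,(b_{ℓ/2},-1))`. -/
def dependsOnActions {d ℓ : ℕ} (j : Fin ℓ → Idx d) : Prop :=
  ∃ (m : ℕ) (b : Fin m → (Fin d → ℤ)), ℓ = 2 * m ∧
    Finset.univ.val.map j =
      Finset.univ.val.map (fun i => ((b i, true) : Idx d)) +
        Finset.univ.val.map (fun i => ((b i, false) : Idx d))

/-- `μ(j)`: the third largest element of `(|j₁|,…,|j_ℓ|)` (and `1` when `ℓ < 3`). -/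
noncomputable def mu {d ℓ : ℕ} (j : Fin ℓ → Idx d) : ℝ :=
  ((List.ofFn fun i => absIdx (j i)).insertionSort (· ≥ ·)).getD 2 1

/-- Truncated frequencies: `ω^Λ_a = ω_a` if `ω_a ≤ Λ`, and `0` otherwise. -/
noncomputable def truncFreq {d : ℕ} (ω : (Fin d → ℤ) → ℝ) (Λ : ℝ) (a : Fin d → ℤ) : ℝ :=
  if ω a ≤ Λ then ω a else 0

/-! ### Auxiliary lemmas -/

lemma one_le_getD (l : List ℝ) (h : ∀ x ∈ l, 1 ≤ x) (n : ℕ) : 1 ≤ l.getD n 1 := by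
  rcases lt_or_ge n l.length with hn | hn
  · rw [List.getD_eq_getElem _ _ hn]; exact h _ (List.getElem_mem hn)
  · rw [List.getD_eq_default _ _ hn]

lemma sorted_getD_anti (l : List ℝ) (hs : l.Pairwise (· ≥ ·)) (h1 : ∀ x ∈ l, 1 ≤ x)
    {m n : ℕ} (hmn : m ≤ n) : l.getD n 1 ≤ l.getD m 1 := by
  rcases lt_or_ge n l.length with hn | hn
  · have hm : m < l.length := lt_of_le_of_lt hmn hn
    rw [List.getD_eq_getElem _ _ hn, List.getD_eq_getElem _ _ hm]
    exact hs.rel_get_of_le (a := ⟨m, hm⟩) (b := ⟨n, hn⟩) hmn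
  · rw [List.getD_eq_default _ _ hn]
    exact one_le_getD l h1 m

lemma sublist_getD_le (l₁ l₂ : List ℝ) (h : l₁.Sublist l₂) (hs : l₂.Pairwise (· ≥ ·))
    (h1 : ∀ x ∈ l₂, 1 ≤ x) (n : ℕ) : l₁.getD n 1 ≤ l₂.getD n 1 := by
  induction h generalizing n with
  | slnil => simp
  | @cons l₁ l₂ a h ih =>
      have h1' : ∀ x ∈ l₂, 1 ≤ x := fun x hx => h1 x (List.mem_cons_of_mem _ hx)
      refine (ih hs.of_cons h1' n).trans ?_
      cases n with
      | zero =>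
          cases l₂ with
          | nil => simpa using h1 a (List.mem_cons_self)
          | cons b t =>
              simpa using (List.pairwise_cons.mp hs).1 b (List.mem_cons_self)
      | succ n =>
          show l₂.getD (n+1) 1 ≤ l₂.getD n 1
          exact sorted_getD_anti l₂ hs.of_cons h1' (Nat.le_succ n)
  | @cons_cons l₁ l₂ a h ih =>
      cases n with
      | zero => simp
      | succ n =>
          simpa using ih hs.of_cons (fun x hx => h1 x (List.mem_cons_of_mem _ hx)) n

lemma one_le_absIdx {d : ℕ} (j : Idx d) : 1 ≤ absIdx j := le_max_left _ _

lemma one_le_mu {d ℓ : ℕ} (j : Fin ℓ → Idx d) : 1 ≤ mu j := by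
  apply one_le_getD
  intro x hx
  rw [List.mem_insertionSort] at hx
  obtain ⟨i, rfl⟩ := Set.mem_range.mp ((List.mem_ofFn' _ _).mp hx)
  exact one_le_absIdx _

lemma mu_le_mu {d ℓ₁ ℓ₂ : ℕ} (k : Fin ℓ₁ → Idx d) (j : Fin ℓ₂ → Idx d)
    (h : ((List.ofFn fun i => absIdx (k i)) : Multiset ℝ) ≤
         ((List.ofFn fun i => absIdx (j i)) : Multiset ℝ)) : mu k ≤ mu j := by
  set l₁ := List.ofFn fun i => absIdx (k i)
  set l₂ := List.ofFn fun i => absIdx (j i)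
  have h1 : ∀ x ∈ l₂, 1 ≤ x := by
    intro x hx
    obtain ⟨i, rfl⟩ := Set.mem_range.mp ((List.mem_ofFn' _ _).mp hx)
    exact one_le_absIdx _
  have hsub : (l₁.insertionSort (· ≥ ·)).Sublist (l₂.insertionSort (· ≥ ·)) := by
    apply List.sublist_of_subperm_of_pairwise _ (List.pairwise_insertionSort _ _)
      (List.pairwise_insertionSort _ _)
    exact ((List.perm_insertionSort _ _).subperm.trans (Multiset.coe_le.mp h)).trans
      ((List.perm_insertionSort _ _).symm.subperm)
  exact sublist_getD_le _ _ hsub (List.pairwise_insertionSort _ _)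
    (fun x hx => h1 x ((List.perm_insertionSort _ _).mem_iff.mp hx)) 2

lemma multiset_succAbove {β : Type*} {n : ℕ} (f : Fin (n+1) → β) (p : Fin (n+1)) :
    Finset.univ.val.map f = f p ::ₘ Finset.univ.val.map (fun i => f (p.succAbove i)) := by
  rw [Fin.univ_succAbove _ p]
  simp only [Finset.cons_val, Finset.map_val, Multiset.map_cons, Multiset.map_map,
    Function.comp_def, Fin.succAboveEmb_apply]

lemma moment_eq_zero_of_depends {d ℓ : ℕ} {j : Fin ℓ → Idx d}
    (hj : dependsOnActions j) : moment j = 0 := by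
  obtain ⟨m, b, hlm, hms⟩ := hj
  have key : moment j = ((Finset.univ.val.map j).map (fun z : Idx d => sgn z.2 • z.1)).sum := by
    rw [Multiset.map_map]; rfl
  rw [key, hms, Multiset.map_add, Multiset.sum_add, Multiset.map_map, Multiset.map_map]
  show (∑ i : Fin m, sgn true • b i) + (∑ i : Fin m, sgn false • b i) = 0
  simp [sgn]

lemma map_cons_pair {d m : ℕ} (a : Fin d → ℤ) (b : Fin m → Fin d → ℤ) (c : Bool) :
    Finset.univ.val.map (fun i : Fin (m+1) => ((Fin.cons (α := fun _ => Fin d → ℤ) a b i, c) : Idx d)) =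
      (a, c) ::ₘ Finset.univ.val.map (fun i => ((b i, c) : Idx d)) := by
  rw [multiset_succAbove _ 0]
  simp

lemma depends_extend {d n : ℕ} (k : Fin n → Idx d) (a : Fin d → ℤ) (j : Fin (n+2) → Idx d)
    (hms : Finset.univ.val.map j = (a, true) ::ₘ (a, false) ::ₘ Finset.univ.val.map k)
    (hk : dependsOnActions k) : dependsOnActions j := by
  obtain ⟨m, b, hlm, hkms⟩ := hk
  refine ⟨m + 1, Fin.cons (α := fun _ => Fin d → ℤ) a b, by omega, ?_⟩
  rw [hms, hkms, map_cons_pair, map_cons_pair, Multiset.cons_add, Multiset.add_cons]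

lemma sgn_ne_zero (c : Bool) : sgn c ≠ 0 := by cases c <;> simp [sgn]

lemma abs_sgn_real (c : Bool) : |((sgn c : ℤ) : ℝ)| = 1 := by cases c <;> simp [sgn]

lemma sgn_not (c : Bool) : sgn (!c) = - sgn c := by cases c <;> simp [sgn]

lemma trunc_eq_of_le {d : ℕ} (ω : (Fin d → ℤ) → ℝ) (Λ : ℝ) {a : Fin d → ℤ}
    (h : ω a ≤ Λ) : truncFreq ω Λ a = ω a := if_pos h

lemma trunc_eq_zero {d : ℕ} (ω : (Fin d → ℤ) → ℝ) (Λ : ℝ) {a : Fin d → ℤ}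
    (h : Λ < ω a) : truncFreq ω Λ a = 0 := if_neg (not_le.mpr h)

/-- The key comparison chain for the non-resonance estimate. -/
lemma chain_le {γ' γr α' αr μk μj X : ℝ} (hγ'0 : 0 < γ') (hγ : γ' ≤ γr)
    (hαr : 0 ≤ αr) (hα : αr ≤ α') (hμk : 1 ≤ μk) (hμ : μk ≤ μj)
    (hres : γr * μk ^ (-αr) ≤ X) : γ' * μj ^ (-α') ≤ X := by
  refine le_trans ?_ hres
  have hμj : (1:ℝ) ≤ μj := hμk.trans hμ
  have h1 : μj ^ (-α') ≤ μk ^ (-αr) := by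
    refine (Real.rpow_le_rpow_of_exponent_le hμj (neg_le_neg hα)).trans ?_
    exact Real.rpow_le_rpow_of_nonpos (lt_of_lt_of_le zero_lt_one hμk) hμ
      (neg_nonpos.mpr hαr)
  exact mul_le_mul hγ h1 (Real.rpow_nonneg (by linarith) _) (by linarith)

set_option maxHeartbeats 1000000 in
/-- Discrete small-divisor estimate for splitting methods under the cutoff
`K ≤ π/3`, key claim in the proof of Theorem 4.2. With `Λ = K/h` and `γ, α` as in the
truncated non-resonance estimate, one has
`|exp(i h Ω^Λ(j)) − 1| ≥ (2γ/π) h μ(j)^{-α}`. -/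
theorem discrete_small_divisor_estimate
    {d : ℕ} (hd : 1 ≤ d) (ω : (Fin d → ℤ) → ℝ) (ℓ : ℕ) (hℓ : 3 ≤ ℓ)
    (γℓ γℓ1 γℓ2 αℓ αℓ1 αℓ2 : ℝ)
    (hγℓ : 0 < γℓ) (hγℓ1 : 0 < γℓ1) (hγℓ2 : 0 < γℓ2)
    (hαℓ : 0 ≤ αℓ) (hαℓ1 : 0 ≤ αℓ1) (hαℓ2 : 0 ≤ αℓ2)
    (hresℓ : ∀ k : Fin ℓ → Idx d, ¬ dependsOnActions k →
      γℓ * mu k ^ (-αℓ) ≤ |bigOmega ω k|)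
    (hresℓ1 : ∀ k : Fin (ℓ - 1) → Idx d, ¬ dependsOnActions k →
      γℓ1 * mu k ^ (-αℓ1) ≤ |bigOmega ω k|)
    (hresℓ2 : ∀ k : Fin (ℓ - 2) → Idx d, ¬ dependsOnActions k →
      γℓ2 * mu k ^ (-αℓ2) ≤ |bigOmega ω k|)
    (h K Λ : ℝ) (hh : 0 < h) (hK : 0 < K) (hKπ : K ≤ Real.pi / 3)
    (hΛ : Λ = K / h) (hω0 : ω 0 ≤ Λ)
    (j : Fin ℓ → Idx d) (hmom : moment j = 0) (hA : ¬ dependsOnActions j)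
    (hbig : (Finset.univ.filter (fun i => Λ < ω (j i).1)).card ≤ 2)
    (hpair : ∀ p q : Fin ℓ, p ≠ q → Λ < ω (j p).1 → Λ < ω (j q).1 →
      (j p).2 = !(j q).2)
    (hsmall : ∀ i, h * |truncFreq ω Λ (j i).1| ≤ K)
    (hsmall2 : ∃ T : Finset (Fin ℓ), T.card ≤ 2 ∧
      ∀ i ∉ T, h * |truncFreq ω Λ (j i).1| ≤ K / ((ℓ : ℝ) - 2)) :
    2 * min (min γℓ γℓ1) γℓ2 / Real.pi * h * mu j ^ (-(max (max αℓ αℓ1) αℓ2)) ≤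
      ‖Complex.exp ((h : ℂ) * (bigOmega (truncFreq ω Λ) j : ℂ) * Complex.I)
        - 1‖ := by
  have hπ := Real.pi_pos
  obtain ⟨m, rfl⟩ : ∃ m, ℓ = m + 3 := ⟨ℓ - 3, by omega⟩
  set γ' := min (min γℓ γℓ1) γℓ2 with hγ'def
  set α' := max (max αℓ αℓ1) αℓ2 with hα'def
  have hγ'0 : 0 < γ' := lt_min (lt_min hγℓ hγℓ1) hγℓ2
  set Ω := bigOmega (truncFreq ω Λ) j with hΩdef
  set S := (Finset.univ.filter (fun i : Fin (m+3) => Λ < ω (j i).1)) with hSdef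
  have hmemS : ∀ i, i ∈ S ↔ Λ < ω (j i).1 := by intro i; simp [hSdef]
  -- Lower bound on `|Ω|`.
  have hlow : γ' * mu j ^ (-α') ≤ |Ω| := by
    have hc : S.card = 0 ∨ S.card = 1 ∨ S.card = 2 := by omega
    rcases hc with hc | hc | hc
    · -- no large frequencies
      have hempty : S = ∅ := Finset.card_eq_zero.mp hc
      have hle : ∀ i, ω (j i).1 ≤ Λ := by
        intro i
        apply not_lt.mp
        intro hlt
        have := (hmemS i).mpr hlt
        simp [hempty] at this
      have hΩeq : Ω = bigOmega ω j := by
        rw [hΩdef]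
        exact Finset.sum_congr rfl fun i _ => by rw [trunc_eq_of_le _ _ (hle i)]
      rw [hΩeq]
      exact chain_le hγ'0 ((min_le_left _ _).trans (min_le_left _ _)) hαℓ
        ((le_max_left _ _).trans (le_max_left _ _)) (one_le_mu j) le_rfl (hresℓ j hA)
    · -- one large frequency
      obtain ⟨p, hp⟩ := Finset.card_eq_one.mp hc
      have hmem : ∀ i, Λ < ω (j i).1 ↔ i = p := by
        intro i; rw [← hmemS i, hp, Finset.mem_singleton]
      set k : Fin (m+2) → Idx d := fun i => j (p.succAbove i) with hkdef
      have hle : ∀ i : Fin (m+2), ω (k i).1 ≤ Λ := by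
        intro i
        apply not_lt.mp
        intro hlt
        exact Fin.succAbove_ne p i ((hmem _).mp hlt)
      have hΩeq : Ω = bigOmega ω k := by
        rw [hΩdef]
        show bigOmega (truncFreq ω Λ) j = _
        unfold bigOmega
        rw [Fin.sum_univ_succAbove (fun i => (sgn (j i).2 : ℝ) * truncFreq ω Λ (j i).1) p]
        rw [trunc_eq_zero _ _ ((hmem p).mpr rfl), mul_zero, zero_add]
        exact Finset.sum_congr rfl fun i _ => by rw [trunc_eq_of_le _ _ (hle i)]
      have hkA : ¬ dependsOnActions k := by
        intro hdep
        have hmk : moment k = 0 := moment_eq_zero_of_depends hdep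
        have hsplit : moment j = sgn (j p).2 • (j p).1 + moment k := by
          unfold moment
          rw [Fin.sum_univ_succAbove (fun i => sgn (j i).2 • (j i).1) p]
        rw [hmom, hmk, add_zero] at hsplit
        have hX : (j p).1 = 0 := by
          rcases smul_eq_zero.mp hsplit.symm with hs | hs
          · exact absurd hs (sgn_ne_zero _)
          · exact hs
        have := (hmem p).mpr rfl
        rw [hX] at this
        linarith
      have hmu : mu k ≤ mu j := by
        apply mu_le_mu
        rw [← Fin.univ_val_map, ← Fin.univ_val_map,
          multiset_succAbove (fun i => absIdx (j i)) p]
        exact Multiset.le_cons_self _ _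
      rw [hΩeq]
      exact chain_le hγ'0 ((min_le_left _ _).trans (min_le_right _ _)) hαℓ1
        ((le_max_right _ _).trans (le_max_left _ _)) (one_le_mu k) hmu (hresℓ1 k hkA)
    · -- two large frequencies
      obtain ⟨p, q, hpq, hS⟩ := Finset.card_eq_two.mp hc
      have hmem : ∀ i, Λ < ω (j i).1 ↔ (i = p ∨ i = q) := by
        intro i; rw [← hmemS i, hS]; simp
      obtain ⟨q', hq'⟩ := Fin.exists_succAbove_eq (show q ≠ p from hpq.symm)
      set k : Fin (m+1) → Idx d := fun i => j (p.succAbove (q'.succAbove i)) with hkdef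
      have hne : ∀ i : Fin (m+1),
          p.succAbove (q'.succAbove i) ≠ p ∧ p.succAbove (q'.succAbove i) ≠ q := by
        intro i
        refine ⟨Fin.succAbove_ne p _, ?_⟩
        rw [← hq']
        intro hcon
        exact Fin.succAbove_ne q' i (Fin.succAbove_right_injective hcon)
      have hle : ∀ i : Fin (m+1), ω (k i).1 ≤ Λ := by
        intro i
        apply not_lt.mp
        intro hlt
        rcases (hmem _).mp hlt with hcon | hcon
        exacts [(hne i).1 hcon, (hne i).2 hcon]
      have hδ : (j p).2 = !(j q).2 :=
        hpair p q hpq ((hmem p).mpr (Or.inl rfl)) ((hmem q).mpr (Or.inr rfl))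
      have hΩeq : Ω = bigOmega ω k := by
        rw [hΩdef]
        show bigOmega (truncFreq ω Λ) j = _
        unfold bigOmega
        rw [Fin.sum_univ_succAbove (fun i => (sgn (j i).2 : ℝ) * truncFreq ω Λ (j i).1) p,
          Fin.sum_univ_succAbove
            (fun i => (sgn (j (p.succAbove i)).2 : ℝ) * truncFreq ω Λ (j (p.succAbove i)).1) q',
          hq']
        rw [trunc_eq_zero _ _ ((hmem p).mpr (Or.inl rfl)),
          trunc_eq_zero _ _ ((hmem q).mpr (Or.inr rfl)), mul_zero, mul_zero, zero_add, zero_add]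
        exact Finset.sum_congr rfl fun i _ => by rw [trunc_eq_of_le _ _ (hle i)]
      have hkA : ¬ dependsOnActions k := by
        intro hdep
        have hmk : moment k = 0 := moment_eq_zero_of_depends hdep
        have hsplit : moment j = sgn (j p).2 • (j p).1 + (sgn (j q).2 • (j q).1 + moment k) := by
          unfold moment
          rw [Fin.sum_univ_succAbove (fun i => sgn (j i).2 • (j i).1) p,
            Fin.sum_univ_succAbove
              (fun i => sgn (j (p.succAbove i)).2 • (j (p.succAbove i)).1) q', hq']
        rw [hmom, hmk, add_zero] at hsplit
        have hX : sgn (j p).2 • (j p).1 + sgn (j q).2 • (j q).1 = 0 := hsplit.symm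
        have hsgn : sgn (j p).2 = - sgn (j q).2 := by rw [hδ, sgn_not]
        have ha : (j p).1 = (j q).1 := by
          funext x
          have hXx := congrFun hX x
          simp only [Pi.add_apply, Pi.smul_apply, Pi.zero_apply, smul_eq_mul] at hXx
          rw [hsgn] at hXx
          cases hb : (j q).2 <;> simp [sgn, hb] at hXx <;> omega
        have hms : Finset.univ.val.map j =
            ((j q).1, true) ::ₘ ((j q).1, false) ::ₘ Finset.univ.val.map k := by
          rw [multiset_succAbove j p, multiset_succAbove (fun i => j (p.succAbove i)) q', hq']
          cases hb : (j q).2 with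
          | false =>
              have hp2 : (j p).2 = true := by rw [hδ, hb]; rfl
              have e1 : j p = ((j q).1, true) := Prod.ext ha hp2
              have e2 : j q = ((j q).1, false) := Prod.ext rfl hb
              rw [e1, e2]
          | true =>
              have hp2 : (j p).2 = false := by rw [hδ, hb]; rfl
              have e1 : j p = ((j q).1, false) := Prod.ext ha hp2
              have e2 : j q = ((j q).1, true) := Prod.ext rfl hb
              rw [e1, e2, Multiset.cons_swap]
        exact hA (depends_extend k (j q).1 j hms hdep)
      have hmu : mu k ≤ mu j := by
        apply mu_le_mu
        rw [← Fin.univ_val_map, ← Fin.univ_val_map,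
          multiset_succAbove (fun i => absIdx (j i)) p,
          multiset_succAbove (fun i => absIdx (j (p.succAbove i))) q']
        exact (Multiset.le_cons_self _ _).trans (Multiset.le_cons_self _ _)
      rw [hΩeq]
      exact chain_le hγ'0 (min_le_right _ _) hαℓ2 (le_max_right _ _) (one_le_mu k) hmu
        (hresℓ2 k hkA)
  -- Upper bound on `h * |Ω|`.
  have hup : h * |Ω| ≤ 3 * K := by
    have habs1 : |Ω| ≤ ∑ i, |truncFreq ω Λ (j i).1| := by
      refine (Finset.abs_sum_le_sum_abs _ _).trans ?_
      refine le_of_eq (Finset.sum_congr rfl fun i _ => ?_)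
      rw [abs_mul, abs_sgn_real, one_mul]
    obtain ⟨T, hT2, hTs⟩ := hsmall2
    have h1 : h * |Ω| ≤ ∑ i, h * |truncFreq ω Λ (j i).1| := by
      rw [← Finset.mul_sum]
      exact mul_le_mul_of_nonneg_left habs1 hh.le
    have hsplitT : ∑ i, h * |truncFreq ω Λ (j i).1| =
        (∑ i ∈ T, h * |truncFreq ω Λ (j i).1|) + ∑ i ∈ Tᶜ, h * |truncFreq ω Λ (j i).1| :=
      (Finset.sum_add_sum_compl T _).symm
    have hb1 : ∑ i ∈ T, h * |truncFreq ω Λ (j i).1| ≤ (T.card : ℝ) * K := by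
      have := Finset.sum_le_card_nsmul T _ K (fun i _ => hsmall i)
      simpa [nsmul_eq_mul] using this
    have hb2 : ∑ i ∈ Tᶜ, h * |truncFreq ω Λ (j i).1| ≤
        (Tᶜ.card : ℝ) * (K / (((m+3 : ℕ) : ℝ) - 2)) := by
      have := Finset.sum_le_card_nsmul Tᶜ _ _ (fun i hi => hTs i (Finset.mem_compl.mp hi))
      simpa [nsmul_eq_mul] using this
    have hTle : T.card ≤ m + 3 := (Finset.card_le_univ T).trans_eq (by simp)
    have hcardc : (Tᶜ.card : ℝ) = ((m:ℝ) + 3) - (T.card : ℝ) := by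
      rw [Finset.card_compl, Fintype.card_fin]
      push_cast [Nat.cast_sub hTle]
      ring
    set t := (T.card : ℝ) with htdef
    have ht0 : 0 ≤ t := by positivity
    have ht2 : t ≤ 2 := by rw [htdef]; exact_mod_cast hT2
    have hm0 : (0:ℝ) ≤ (m:ℝ) := by positivity
    have hD : (0:ℝ) < (m:ℝ) + 1 := by linarith
    have hcast : (((m+3 : ℕ) : ℝ) - 2) = (m:ℝ) + 1 := by push_cast; ring
    have hKd : K / ((m:ℝ) + 1) ≤ K := by
      apply div_le_self hK.le
      linarith
    have e1 : (((m:ℝ)+3) - t) * (K / ((m:ℝ)+1)) = K + (2 - t) * (K / ((m:ℝ)+1)) := by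
      field_simp
      ring
    have e2 : (2 - t) * (K / ((m:ℝ)+1)) ≤ (2 - t) * K :=
      mul_le_mul_of_nonneg_left hKd (by linarith)
    have hb2' : ∑ i ∈ Tᶜ, h * |truncFreq ω Λ (j i).1| ≤ 3 * K - t * K := by
      rw [hcast, hcardc] at hb2
      calc ∑ i ∈ Tᶜ, h * |truncFreq ω Λ (j i).1| ≤ (((m:ℝ)+3) - t) * (K / ((m:ℝ)+1)) := hb2
        _ = K + (2 - t) * (K / ((m:ℝ)+1)) := e1
        _ ≤ K + (2 - t) * K := by linarith
        _ = 3 * K - t * K - (t * K - t * K) := by ring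
        _ ≤ 3 * K - t * K := by linarith
    calc h * |Ω| ≤ ∑ i, h * |truncFreq ω Λ (j i).1| := h1
      _ = (∑ i ∈ T, h * |truncFreq ω Λ (j i).1|) + ∑ i ∈ Tᶜ, h * |truncFreq ω Λ (j i).1| :=
          hsplitT
      _ ≤ t * K + (3 * K - t * K) := add_le_add hb1 hb2'
      _ = 3 * K := by ring
  -- Analytic part.
  set θ := h * Ω with hθdef
  have hθπ : |θ| ≤ Real.pi := by
    rw [hθdef, abs_mul, abs_of_pos hh]
    linarith
  have hexp : (h:ℂ) * ((Ω : ℝ) : ℂ) * Complex.I = ((θ : ℝ) : ℂ) * Complex.I := by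
    rw [hθdef]; push_cast; ring
  rw [hexp]
  set A := ‖Complex.exp (((θ : ℝ) : ℂ) * Complex.I) - 1‖ with hAdef
  have hA0 : 0 ≤ A := norm_nonneg _
  have hA2 : A^2 = 2 - 2 * Real.cos θ := by
    have hz : Complex.exp (((θ : ℝ) : ℂ) * Complex.I) - 1 =
        ((Real.cos θ - 1 : ℝ) : ℂ) + ((Real.sin θ : ℝ) : ℂ) * Complex.I := by
      rw [Complex.exp_mul_I]
      push_cast
      ring
    rw [hAdef, hz, Complex.sq_norm, Complex.normSq_add_mul_I]
    nlinarith [Real.sin_sq_add_cos_sq θ]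
  have hcos := Real.cos_le_one_sub_mul_cos_sq hθπ
  have hsq : (2 / Real.pi * |θ|)^2 ≤ A^2 := by
    rw [hA2]
    have e : (2 / Real.pi * |θ|)^2 = 2 * (2 / Real.pi ^ 2 * θ ^ 2) := by
      rw [mul_pow, div_pow, sq_abs]; ring
    rw [e]
    linarith [hcos]
  have hAc : 2 / Real.pi * |θ| ≤ A := by
    have hc0 : 0 ≤ 2 / Real.pi * |θ| := by positivity
    calc 2 / Real.pi * |θ| = Real.sqrt ((2 / Real.pi * |θ|)^2) := (Real.sqrt_sq hc0).symm
      _ ≤ Real.sqrt (A^2) := Real.sqrt_le_sqrt hsq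
      _ = A := Real.sqrt_sq hA0
  refine le_trans ?_ hAc
  have hθabs : |θ| = h * |Ω| := by rw [hθdef, abs_mul, abs_of_pos hh]
  rw [hθabs]
  have hfin : 2 / Real.pi * (h * (γ' * mu j ^ (-α'))) ≤ 2 / Real.pi * (h * |Ω|) := by
    apply mul_le_mul_of_nonneg_left _ (by positivity)
    exact mul_le_mul_of_nonneg_left hlow hh.le
  calc 2 * γ' / Real.pi * h * mu j ^ (-α')
      = 2 / Real.pi * (h * (γ' * mu j ^ (-α'))) := by ring
    _ ≤ 2 / Real.pi * (h * |Ω|) := hfin
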